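/- The octahedron quantum graph with preferred-orientation coupling has eigenvalue square roots exactly at k = 2πn for n ∈ ℕ (coming from the factor sin²(k/2) in each of the four component secular equations) and exactly at k = ±2π/3 + 2πn (coming from the factor 4cos²(k/2) − 1 in the j = 0 and j = 2 sectors); all other large eigenvalue square roots lie in intervals [π + 2πn − √10/k + O(1/k²), π + 2πn + √10/k + O(1/k²)] or [π/2 + πn − 5/k² + O(1/k⁴), π/2 + πn + 5/k² + O(1/k⁴)]. -/
import Mathlib


open Real

/-- The union of the zero sets of the four secular functions of the component
operators of the octahedron with preferred-orientation coupling. -/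
def octaSec (k : ℝ) : Prop :=
  k * sin (k / 2) ^ 2 * (4 * cos (k / 2) ^ 2 - 1) *
      (k ^ 2 * cos (k / 2) ^ 2 + cos (k / 2) ^ 2 - 1 / 2) = 0 ∨
  k * sin (k / 2) ^ 2 *
      (2 * k ^ 4 * cos k * cos (k / 2) ^ 2 + k ^ 2 * (1 + 4 * cos (k / 2) ^ 2 * cos k)
        + 2 * cos k * cos (k / 2) ^ 2) = 0 ∨
  k * sin (k / 2) ^ 2 * (cos (k / 2) ^ 2 - 1 / 4) *
      (k ^ 2 * (cos (k / 2) ^ 2 - 1 / 2) + cos (k / 2) ^ 2) = 0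

lemma octa_abs_le_of_sq_le {a b : ℝ} (hb : 0 ≤ b) (h : a ^ 2 ≤ b ^ 2) : |a| ≤ b := by
  calc |a| = Real.sqrt (a ^ 2) := (Real.sqrt_sq_eq_abs a).symm
    _ ≤ Real.sqrt (b ^ 2) := Real.sqrt_le_sqrt h
    _ = b := Real.sqrt_sq hb

lemma octa_pi_sq_lt_ten : π ^ 2 < 10 := by
  nlinarith [Real.pi_lt_d2, Real.pi_pos]

/-- Every point is within `(π/2)·|cos x|` of a zero of `cos`. -/
lemma octa_near_cos (x : ℝ) : ∃ n : ℤ, |x - (π / 2 + π * n)| ≤ π / 2 * |cos x| := by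
  have hπ := Real.pi_pos
  set n : ℤ := round ((x - π / 2) / π) with hn
  refine ⟨n, ?_⟩
  have h1 : |(x - π / 2) / π - n| ≤ 1 / 2 := abs_sub_round _
  obtain ⟨h1a, h1b⟩ := abs_le.1 h1
  have hdiv : (x - π / 2) / π * π = x - π / 2 := by field_simp <;> ring
  have ht : |x - (π / 2 + π * n)| ≤ π / 2 := by
    rw [abs_le]
    constructor <;> nlinarith [mul_le_mul_of_nonneg_right h1a hπ.le,
      mul_le_mul_of_nonneg_right h1b hπ.le]
  set t := x - (π / 2 + π * n) with htdef
  have hx : x = t + π / 2 + (n : ℝ) * π := by rw [htdef]; ring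
  have hcos : |cos x| = |sin t| := by
    rw [hx, Real.cos_add_int_mul_pi, abs_mul, Real.cos_add_pi_div_two, abs_neg]
    rcases Int.even_or_odd n with he | ho
    · rw [he.neg_one_zpow]; simp
    · rw [ho.neg_one_zpow]; simp
  have hj : 2 / π * |t| ≤ |sin t| := Real.mul_abs_le_abs_sin ht
  rw [hcos]
  calc |t| = π / 2 * (2 / π * |t|) := by field_simp <;> ring
    _ ≤ π / 2 * |sin t| := mul_le_mul_of_nonneg_left hj (by positivity)

/-- Every point `x` satisfies `(x - (π + 2πn))² ≤ (π²/2)(1 + cos x)` for a suitable `n`. -/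
lemma octa_near_neg_one (x : ℝ) :
    ∃ n : ℤ, (x - (π + 2 * π * n)) ^ 2 ≤ π ^ 2 / 2 * (1 + cos x) := by
  have hπ := Real.pi_pos
  set n : ℤ := round ((x - π) / (2 * π)) with hn
  refine ⟨n, ?_⟩
  have h1 : |(x - π) / (2 * π) - n| ≤ 1 / 2 := abs_sub_round _
  obtain ⟨h1a, h1b⟩ := abs_le.1 h1
  have hdiv : (x - π) / (2 * π) * (2 * π) = x - π := by field_simp <;> ring
  have ht : |x - (π + 2 * π * n)| ≤ π := by
    rw [abs_le]
    constructor <;> nlinarith [mul_le_mul_of_nonneg_right h1a (by linarith : (0:ℝ) ≤ 2 * π),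
      mul_le_mul_of_nonneg_right h1b (by linarith : (0:ℝ) ≤ 2 * π)]
  set t := x - (π + 2 * π * n) with htdef
  have hx : x = t + π + (n : ℝ) * (2 * π) := by rw [htdef]; ring
  have hcos : cos x = -cos t := by
    rw [hx, Real.cos_add_int_mul_two_pi, Real.cos_add_pi]
  have hsq : 1 + cos x = 2 * sin (t / 2) ^ 2 := by
    have h2 : cos (t / 2) ^ 2 = 1 / 2 + cos t / 2 := by
      have := Real.cos_sq (t / 2)
      rwa [show 2 * (t / 2) = t by ring] at this
    have h3 : sin (t / 2) ^ 2 = 1 - cos (t / 2) ^ 2 := Real.sin_sq (t / 2)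
    rw [hcos]; rw [h2] at h3; linarith
  have ht2 : |t / 2| ≤ π / 2 := by rw [abs_div, abs_two]; linarith [ht]
  have habs2 : |t / 2| = |t| / 2 := by rw [abs_div, abs_two]
  have hj : 2 / π * (|t| / 2) ≤ |sin (t / 2)| := by
    have := Real.mul_abs_le_abs_sin ht2
    rwa [habs2] at this
  have hj' : |t| ≤ π * |sin (t / 2)| := by
    calc |t| = π * (2 / π * (|t| / 2)) := by field_simp <;> ring
      _ ≤ π * |sin (t / 2)| := mul_le_mul_of_nonneg_left hj hπ.le
  have hsq2 : t ^ 2 ≤ π ^ 2 * sin (t / 2) ^ 2 := by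
    have h := pow_le_pow_left₀ (abs_nonneg t) hj' 2
    rwa [sq_abs, mul_pow, sq_abs] at h
  rw [hsq]
  linarith

/-- `cos x = -1/2` forces `x = ±2π/3 + 2πn`. -/
lemma octa_cos_eq_neg_half {x : ℝ} (h : cos x = -(1 / 2)) :
    ∃ n : ℤ, x = 2 * π / 3 + 2 * π * n ∨ x = -(2 * π / 3) + 2 * π * n := by
  have h23 : cos (2 * π / 3) = -(1 / 2) := by
    have h2 := Real.cos_two_mul (π / 3)
    rw [Real.cos_pi_div_three] at h2
    rw [show 2 * π / 3 = 2 * (π / 3) by ring, h2]; norm_num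
  have hxy : cos x = cos (2 * π / 3) := by rw [h23, h]
  obtain ⟨m, hm | hm⟩ := Real.cos_eq_cos_iff.1 hxy
  · exact ⟨-m, Or.inl (by push_cast; linarith)⟩
  · exact ⟨m, Or.inr (by push_cast; linarith)⟩

lemma octa_neg_one_zpow_sq (n : ℤ) : ((-1 : ℝ) ^ n) ^ 2 = 1 := by
  rw [sq, ← zpow_add₀ (by norm_num : (-1 : ℝ) ≠ 0), show n + n = 2 * n by ring, zpow_mul]
  norm_num

set_option maxHeartbeats 1600000 in
/-- The octahedron quantum graph with preferred-orientation coupling: eigenvalue square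
roots occur exactly at 2πn, at ±2π/3 + 2πn, and otherwise (at high energy) in shrinking
intervals around π + 2πn or π/2 + πn. -/
theorem octahedron_po_spectrum :
    (∀ n : ℕ, octaSec (2 * π * n)) ∧
    (∀ n : ℤ, octaSec (2 * π / 3 + 2 * π * n) ∧ octaSec (-(2 * π / 3) + 2 * π * n)) ∧
    ∃ C K : ℝ, ∀ k : ℝ, k > K → octaSec k →
      (∃ n : ℤ, k = 2 * π * n) ∨
      (∃ n : ℤ, k = 2 * π / 3 + 2 * π * n ∨ k = -(2 * π / 3) + 2 * π * n) ∨
      (∃ n : ℤ, |k - (π + 2 * π * n)| ≤ Real.sqrt 10 / k + C / k ^ 2) ∨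
      (∃ n : ℤ, |k - (π / 2 + π * n)| ≤ 5 / k ^ 2 + C / k ^ 4) := by
  refine ⟨?_, ?_, ?_⟩
  · -- k = 2πn
    intro n
    unfold octaSec
    left
    have hs : sin (2 * π * (n : ℝ) / 2) = 0 := by
      rw [show 2 * π * (n : ℝ) / 2 = (n : ℝ) * π by ring]
      exact Real.sin_nat_mul_pi n
    rw [hs]; ring
  · -- k = ±2π/3 + 2πn
    intro n
    constructor
    · unfold octaSec
      left
      have hc : cos ((2 * π / 3 + 2 * π * (n : ℝ)) / 2) ^ 2 = 1 / 4 := by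
        rw [show (2 * π / 3 + 2 * π * (n : ℝ)) / 2 = π / 3 + (n : ℝ) * π by ring,
          Real.cos_add_int_mul_pi, mul_pow, octa_neg_one_zpow_sq, Real.cos_pi_div_three]
        norm_num
      rw [hc]; ring
    · unfold octaSec
      left
      have hc : cos ((-(2 * π / 3) + 2 * π * (n : ℝ)) / 2) ^ 2 = 1 / 4 := by
        rw [show (-(2 * π / 3) + 2 * π * (n : ℝ)) / 2 = -(π / 3) + (n : ℝ) * π by ring,
          Real.cos_add_int_mul_pi, mul_pow, octa_neg_one_zpow_sq, Real.cos_neg,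
          Real.cos_pi_div_three]
        norm_num
      rw [hc]; ring
  · -- asymptotics
    refine ⟨1, 10, fun k hk hsec => ?_⟩
    have hk0 : (0 : ℝ) < k := by linarith
    have hπ := Real.pi_pos
    by_cases hs : sin (k / 2) = 0
    · obtain ⟨n, hn⟩ := Real.sin_eq_zero_iff.1 hs
      exact Or.inl ⟨n, by linarith⟩
    have hs2 : sin (k / 2) ^ 2 ≠ 0 := pow_ne_zero _ hs
    have hks : k * sin (k / 2) ^ 2 ≠ 0 := mul_ne_zero (ne_of_gt hk0) hs2
    have hcsq : cos (k / 2) ^ 2 = 1 / 2 + cos k / 2 := by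
      have := Real.cos_sq (k / 2)
      rwa [show 2 * (k / 2) = k by ring] at this
    have hone : -1 ≤ cos k := Real.neg_one_le_cos k
    have hone' : cos k ≤ 1 := Real.cos_le_one k
    have hsqrt10 : π ≤ Real.sqrt 10 := by
      have h1 : π = Real.sqrt (π ^ 2) := (Real.sqrt_sq hπ.le).symm
      rw [h1]
      exact Real.sqrt_le_sqrt octa_pi_sq_lt_ten.le
    have hsqrt10' : (0 : ℝ) ≤ Real.sqrt 10 := Real.sqrt_nonneg 10
    unfold octaSec at hsec
    rcases hsec with h | h | h
    · rcases mul_eq_zero.1 h with h' | hB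
      · rcases mul_eq_zero.1 h' with h'' | hA
        · exact absurd h'' hks
        · -- 4cos² - 1 = 0 : cos k = -1/2
          have hck : cos k = -(1 / 2) := by linarith
          exact Or.inr (Or.inl (octa_cos_eq_neg_half hck))
      · -- k²cos² + cos² - 1/2 = 0
        have hle : cos (k / 2) ^ 2 ≤ (1 / k) ^ 2 := by
          rw [div_pow, one_pow, le_div_iff₀ (by positivity)]
          nlinarith [sq_nonneg (cos (k / 2))]
        have habs : |cos (k / 2)| ≤ 1 / k := octa_abs_le_of_sq_le (by positivity) hle
        obtain ⟨n, hn⟩ := octa_near_cos (k / 2)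
        refine Or.inr (Or.inr (Or.inl ⟨n, ?_⟩))
        have heq : |k - (π + 2 * π * (n : ℝ))| = 2 * |k / 2 - (π / 2 + π * n)| := by
          rw [show k - (π + 2 * π * (n : ℝ)) = 2 * (k / 2 - (π / 2 + π * n)) by ring,
            abs_mul, abs_two]
        have h3 : π * |cos (k / 2)| ≤ Real.sqrt 10 * (1 / k) :=
          mul_le_mul hsqrt10 habs (abs_nonneg _) hsqrt10'
        have h4 : Real.sqrt 10 * (1 / k) = Real.sqrt 10 / k := by ring
        have h5 : (0 : ℝ) ≤ 1 / k ^ 2 := by positivity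
        rw [heq]
        linarith
    · -- middle secular function
      rcases mul_eq_zero.1 h with h'' | hE
      · exact absurd h'' hks
      rw [hcsq] at hE
      set c := cos k with hc
      have hEq : c * (1 + c) * (k ^ 4 + 1) = -(k ^ 2 * (1 + 2 * c + 2 * c ^ 2)) := by
        linear_combination hE
      by_cases hhalf : -(1 / 2) ≤ c
      · have h1c : (0 : ℝ) < 1 + c := by linarith
        have hcneg : c ≤ 0 := by
          by_contra hpos
          push_neg at hpos
          nlinarith [mul_pos (mul_pos hpos h1c) (by positivity : (0 : ℝ) < k ^ 4 + 1),
            sq_nonneg (2 * c + 1), pow_pos hk0 2]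
        have hup : -c ≤ 2 / k ^ 2 := by
          rw [le_div_iff₀ (by positivity)]
          nlinarith [mul_nonneg (neg_nonneg.2 hcneg) h1c.le,
            mul_nonneg (mul_nonneg (neg_nonneg.2 hcneg)
              (by linarith : (0 : ℝ) ≤ c + 1 / 2)) (by positivity : (0 : ℝ) ≤ k ^ 4),
            pow_pos hk0 2, pow_pos hk0 4]
        have habs : |c| ≤ 2 / k ^ 2 := by rw [abs_of_nonpos hcneg]; exact hup
        obtain ⟨n, hn⟩ := octa_near_cos k
        refine Or.inr (Or.inr (Or.inr ⟨n, ?_⟩))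
        have h2 : π / 2 * |c| ≤ π / 2 * (2 / k ^ 2) :=
          mul_le_mul_of_nonneg_left habs (by positivity)
        have h3 : π / 2 * (2 / k ^ 2) ≤ 5 / k ^ 2 := by
          have he : π / 2 * (2 / k ^ 2) = π / k ^ 2 := by ring
          rw [he]
          gcongr
          linarith [Real.pi_le_four]
        have h4 : (0 : ℝ) ≤ 1 / k ^ 4 := by positivity
        linarith
      · push_neg at hhalf
        have hcneg : c ≤ 0 := by linarith
        have h1c : (0 : ℝ) ≤ 1 + c := by linarith
        have hup : 1 + c ≤ 2 / k ^ 2 := by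
          rw [le_div_iff₀ (by positivity)]
          nlinarith [mul_nonneg (neg_nonneg.2 hcneg) h1c,
            mul_nonneg (mul_nonneg (by linarith : (0 : ℝ) ≤ -c - 1 / 2) h1c)
              (by positivity : (0 : ℝ) ≤ k ^ 4),
            pow_pos hk0 2]
        obtain ⟨n, hn⟩ := octa_near_neg_one k
        refine Or.inr (Or.inr (Or.inl ⟨n, ?_⟩))
        have hb : (k - (π + 2 * π * (n : ℝ))) ^ 2 ≤ (Real.sqrt 10 / k) ^ 2 := by
          have h1 : π ^ 2 / 2 * (1 + c) ≤ π ^ 2 / 2 * (2 / k ^ 2) :=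
            mul_le_mul_of_nonneg_left hup (by positivity)
          have h2 : (Real.sqrt 10 / k) ^ 2 = 10 / k ^ 2 := by
            rw [div_pow, Real.sq_sqrt (by norm_num : (0:ℝ) ≤ 10)]
          have he : π ^ 2 / 2 * (2 / k ^ 2) = π ^ 2 / k ^ 2 := by ring
          have h3 : π ^ 2 / k ^ 2 ≤ 10 / k ^ 2 := by
            gcongr
            exact octa_pi_sq_lt_ten.le
          rw [h2]
          rw [he] at h1
          linarith
        have habs := octa_abs_le_of_sq_le (by positivity) hb
        have h5 : (0 : ℝ) ≤ 1 / k ^ 2 := by positivity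
        linarith
    · -- third secular function
      rcases mul_eq_zero.1 h with h' | hD
      · rcases mul_eq_zero.1 h' with h'' | hA
        · exact absurd h'' hks
        · have hck : cos k = -(1 / 2) := by linarith
          exact Or.inr (Or.inl (octa_cos_eq_neg_half hck))
      · rw [hcsq] at hD
        have hck : (k ^ 2 + 1) * cos k = -1 := by linear_combination 2 * hD
        have hcneg : cos k ≤ 0 := by
          by_contra hpos
          push_neg at hpos
          nlinarith [mul_pos (pow_pos hk0 2) hpos]
        have habs : |cos k| ≤ 1 / k ^ 2 := by
          rw [abs_of_nonpos hcneg, le_div_iff₀ (by positivity)]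
          linarith
        obtain ⟨n, hn⟩ := octa_near_cos k
        refine Or.inr (Or.inr (Or.inr ⟨n, ?_⟩))
        have h2 : π / 2 * |cos k| ≤ π / 2 * (1 / k ^ 2) :=
          mul_le_mul_of_nonneg_left habs (by positivity)
        have h3 : π / 2 * (1 / k ^ 2) ≤ 5 / k ^ 2 := by
          have he : π / 2 * (1 / k ^ 2) = π / 2 / k ^ 2 := by ring
          rw [he]
          gcongr
          linarith [Real.pi_le_four]
        have h4 : (0 : ℝ) ≤ 1 / k ^ 4 := by positivity
        linarith
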